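/- If an irreducible GL(ℤ)-polynomial P has two roots of the form a^k and a^ℓ for some a ∈ ℂ \ {−1, 0, 1} and two distinct integers k, ℓ ≥ 2, then all complex roots of P have modulus 1. -/

import Mathlib

/-- A `GL(ℤ)`-polynomial of degree `d`: integer coefficients, leading coefficient
`(-1)^d`, and constant term `1` or `-1`. -/
def IsGLZPoly (P : Polynomial ℤ) (d : ℕ) : Prop :=
  P.natDegree = d ∧ P.leadingCoeff = (-1) ^ d ∧ (P.coeff 0 = 1 ∨ P.coeff 0 = -1)

open Polynomial IntermediateField


/-- Pushforward: if `c` is a conjugate of `a`, then `c^j` is a root of `p` whenever `a^j` is. -/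
lemma rootA (p : Polynomial ℚ) (a : ℂ) (ha : IsIntegral ℚ a) (j : ℕ)
    (hroot : Polynomial.aeval (a ^ j) p = 0) (c : ℂ)
    (hc : Polynomial.aeval c (minpoly ℚ a) = 0) :
    Polynomial.aeval (c ^ j) p = 0 := by
  have hcmem : c ∈ (minpoly ℚ a).aroots ℂ := by
    rw [Polynomial.mem_aroots]
    exact ⟨minpoly.ne_zero ha, hc⟩
  let φ : ℚ⟮a⟯ →ₐ[ℚ] ℂ := (IntermediateField.algHomAdjoinIntegralEquiv ℚ ha).symm ⟨c, hcmem⟩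
  have hφ : φ (AdjoinSimple.gen ℚ a) = c :=
    IntermediateField.algHomAdjoinIntegralEquiv_symm_apply_gen ℚ ha _
  have h0 : Polynomial.aeval ((AdjoinSimple.gen ℚ a) ^ j) p = 0 := by
    have hval := Polynomial.aeval_algHom_apply (ℚ⟮a⟯.val) ((AdjoinSimple.gen ℚ a) ^ j) p
    have : (ℚ⟮a⟯.val) ((AdjoinSimple.gen ℚ a) ^ j) = a ^ j := by
      simp [map_pow]
    rw [this, hroot] at hval
    exact (map_eq_zero_iff _ (ℚ⟮a⟯.val.toRingHom.injective)).mp hval.symm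
  calc Polynomial.aeval (c ^ j) p
      = Polynomial.aeval (φ ((AdjoinSimple.gen ℚ a) ^ j)) p := by rw [map_pow, hφ]
    _ = φ (Polynomial.aeval ((AdjoinSimple.gen ℚ a) ^ j) p) :=
        Polynomial.aeval_algHom_apply φ _ p
    _ = 0 := by rw [h0, map_zero]


/-- Pullback: every root of `p` is a `j`-th power of a conjugate of `a`. -/
lemma rootB (p : Polynomial ℚ) (hm : p.Monic) (hirr : Irreducible p) (a : ℂ)
    (ha : IsIntegral ℚ a) (j : ℕ) (hroot : Polynomial.aeval (a ^ j) p = 0)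
    (z : ℂ) (hz : Polynomial.aeval z p = 0) :
    ∃ c : ℂ, Polynomial.aeval c (minpoly ℚ a) = 0 ∧ c ^ j = z := by
  have haj : IsIntegral ℚ (a ^ j) := ha.pow j
  have hmin : minpoly ℚ (a ^ j) = p := (minpoly.eq_of_irreducible_of_monic hirr hroot hm).symm
  have hzmem : z ∈ (minpoly ℚ (a ^ j)).aroots ℂ := by
    rw [hmin, Polynomial.mem_aroots]
    exact ⟨hm.ne_zero, hz⟩
  let ψ : ℚ⟮a ^ j⟯ →ₐ[ℚ] ℂ := (IntermediateField.algHomAdjoinIntegralEquiv ℚ haj).symm ⟨z, hzmem⟩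
  have hψ : ψ (AdjoinSimple.gen ℚ (a ^ j)) = z :=
    IntermediateField.algHomAdjoinIntegralEquiv_symm_apply_gen ℚ haj _
  have hle : ℚ⟮a ^ j⟯ ≤ IntermediateField.adjoin ℚ ({a} : Set ℂ) := by
    rw [IntermediateField.adjoin_simple_le_iff]
    exact pow_mem (IntermediateField.mem_adjoin_simple_self ℚ a) j
  have hK : ∀ s ∈ ({a} : Set ℂ), IsIntegral ℚ s ∧ ((minpoly ℚ s).map (algebraMap ℚ ℂ)).Splits := by
    rintro s rfl
    exact ⟨ha, IsAlgClosed.splits _⟩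
  obtain ⟨φ, hφ⟩ := IntermediateField.exists_algHom_adjoin_of_splits hK ψ hle
  refine ⟨φ (AdjoinSimple.gen ℚ a), ?_, ?_⟩
  · rw [Polynomial.aeval_algHom_apply φ, IntermediateField.aeval_gen_minpoly, map_zero]
  · have hgen : (AdjoinSimple.gen ℚ a) ^ j =
        IntermediateField.inclusion hle (AdjoinSimple.gen ℚ (a ^ j)) := by
      apply Subtype.coe_injective
      simp
    rw [← map_pow, hgen, ← AlgHom.comp_apply, hφ]
    exact hψ

lemma core (p : Polynomial ℚ) (hm : p.Monic) (hirr : Irreducible p)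
    (hp0 : p.coeff 0 ≠ 0) (a : ℂ) (k l : ℕ) (hk : 1 ≤ k) (hkl : k < l)
    (hrk : Polynomial.aeval (a ^ k) p = 0) (hrl : Polynomial.aeval (a ^ l) p = 0) :
    ∀ z : ℂ, Polynomial.aeval z p = 0 → ‖z‖ = 1 := by
  have hak : IsIntegral ℚ (a ^ k) := ⟨p, hm, hrk⟩
  have ha : IsIntegral ℚ a := IsIntegral.of_pow hk hak
  -- roots of the minimal polynomial of `a` are nonzero
  have hne : ∀ c : ℂ, Polynomial.aeval c (minpoly ℚ a) = 0 → c ≠ 0 := by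
    intro c hc hc0
    rw [hc0] at hc
    have h0 := rootA p a ha k hrk 0 hc
    rw [zero_pow (by omega)] at h0
    simp [Polynomial.aeval_def, Polynomial.eval₂_at_zero] at h0
    exact hp0 (by exact_mod_cast h0)
  set T : Finset ℝ := ((minpoly ℚ a).aroots ℂ).toFinset.image (‖·‖) with hT
  have hmemT : ∀ c : ℂ, Polynomial.aeval c (minpoly ℚ a) = 0 → ‖c‖ ∈ T := by
    intro c hc
    exact Finset.mem_image.2 ⟨c, Multiset.mem_toFinset.2
      ((Polynomial.mem_aroots).2 ⟨minpoly.ne_zero ha, hc⟩), rfl⟩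
  have hTinv : ∀ r ∈ T, ∃ c : ℂ, Polynomial.aeval c (minpoly ℚ a) = 0 ∧ ‖c‖ = r := by
    intro r hr
    obtain ⟨c, hc, rfl⟩ := Finset.mem_image.1 hr
    exact ⟨c, ((Polynomial.mem_aroots).1 (Multiset.mem_toFinset.1 hc)).2, rfl⟩
  have hTne : T.Nonempty := ⟨_, hmemT a (minpoly.aeval ℚ a)⟩
  set M : ℝ := T.max' hTne with hM
  set m : ℝ := T.min' hTne with hm'
  -- key step, applied to extremal roots
  have key : ∀ b : ℂ, Polynomial.aeval b (minpoly ℚ a) = 0 →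
      ∃ c : ℂ, Polynomial.aeval c (minpoly ℚ a) = 0 ∧
        ‖c‖ ^ k = ‖b‖ ^ l := by
    intro b hb
    have hbl := rootA p a ha l hrl b hb
    obtain ⟨c, hc, hck⟩ := rootB p hm hirr a ha k hrk _ hbl
    exact ⟨c, hc, by rw [← norm_pow, hck, norm_pow]⟩
  have hmpos : 0 < m := by
    obtain ⟨b, hb, hbm⟩ := hTinv m (T.min'_mem hTne)
    rw [← hbm]
    exact norm_pos_iff.2 (hne b hb)
  have hM1 : M ≤ 1 := by
    by_contra hM1
    push_neg at hM1
    obtain ⟨b, hb, hbM⟩ := hTinv M (T.max'_mem hTne)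
    obtain ⟨c, hc, hck⟩ := key b hb
    have hcM : ‖c‖ ≤ M := T.le_max' _ (hmemT c hc)
    have h1 : ‖c‖ ^ k ≤ M ^ k :=
      pow_le_pow_left₀ (norm_nonneg _) hcM k
    rw [hck, hbM] at h1
    exact absurd h1 (not_le.2 (pow_lt_pow_right₀ hM1 hkl))
  have hm1 : 1 ≤ m := by
    by_contra hm1
    push_neg at hm1
    obtain ⟨b, hb, hbm⟩ := hTinv m (T.min'_mem hTne)
    obtain ⟨c, hc, hck⟩ := key b hb
    have hcm : m ≤ ‖c‖ := T.min'_le _ (hmemT c hc)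
    have h1 : m ^ k ≤ ‖c‖ ^ k := pow_le_pow_left₀ hmpos.le hcm k
    rw [hck, hbm] at h1
    exact absurd h1 (not_le.2 (pow_lt_pow_right_of_lt_one₀ hmpos hm1 hkl))
  have habs1 : ∀ c : ℂ, Polynomial.aeval c (minpoly ℚ a) = 0 → ‖c‖ = 1 := by
    intro c hc
    have h1 : ‖c‖ ≤ M := T.le_max' _ (hmemT c hc)
    have h2 : m ≤ ‖c‖ := T.min'_le _ (hmemT c hc)
    linarith
  intro z hz
  obtain ⟨c, hc, hck⟩ := rootB p hm hirr a ha k hrk z hz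
  rw [← hck, norm_pow, habs1 c hc, one_pow]

/-- If an irreducible `GL(ℤ)`-polynomial `P` has two roots of the form `a^k` and `a^ℓ`
for some `a ∈ ℂ \ {-1, 0, 1}` and two distinct integers `k, ℓ ≥ 2`, then all complex
roots of `P` have modulus `1`. -/
theorem roots_modulus_one_of_two_power_roots (d : ℕ) (hd : 1 ≤ d)
    (P : Polynomial ℤ) (hP : IsGLZPoly P d) (hirr : Irreducible P)
    (a : ℂ) (ha0 : a ≠ 0) (ha1 : a ≠ 1) (ha2 : a ≠ -1)
    (k l : ℕ) (hk : 2 ≤ k) (hl : 2 ≤ l) (hkl : k ≠ l)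
    (hrk : (P.map (Int.castRingHom ℂ)).IsRoot (a ^ k))
    (hrl : (P.map (Int.castRingHom ℂ)).IsRoot (a ^ l)) :
    ∀ z : ℂ, (P.map (Int.castRingHom ℂ)).IsRoot z → ‖z‖ = 1 := by
  obtain ⟨hdeg, hlead, hc0⟩ := hP
  -- P is primitive
  have hprim : P.IsPrimitive := by
    intro r hr
    have hdvd : r ∣ P.leadingCoeff := ((Polynomial.C_dvd_iff_dvd_coeff r P).mp hr) P.natDegree
    rw [hlead] at hdvd
    exact isUnit_of_dvd_unit hdvd ((isUnit_one.neg).pow d)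
  set Pq : Polynomial ℚ := P.map (Int.castRingHom ℚ) with hPq
  have hPqirr : Irreducible Pq :=
    (Polynomial.IsPrimitive.Int.irreducible_iff_irreducible_map_cast hprim).mp hirr
  set p : Polynomial ℚ := Polynomial.C ((-1 : ℚ) ^ d) * Pq with hp
  have hPqlead : Pq.leadingCoeff = (-1 : ℚ) ^ d := by
    have hinj : Function.Injective (Int.castRingHom ℚ) := Int.cast_injective
    rw [hPq, Polynomial.leadingCoeff_map_of_injective hinj, hlead]
    simp
  have hmonic : p.Monic := by
    unfold Polynomial.Monic
    rw [hp, Polynomial.leadingCoeff_mul, Polynomial.leadingCoeff_C, hPqlead, ← mul_pow]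
    norm_num
  have hpirr : Irreducible p := by
    have hu : IsUnit (Polynomial.C ((-1 : ℚ) ^ d)) :=
      Polynomial.isUnit_C.2 (by norm_num : IsUnit ((-1 : ℚ) ^ d))
    exact ((Associated.irreducible · hPqirr)) (associated_unit_mul_left _ _ hu).symm
  have hp0 : p.coeff 0 ≠ 0 := by
    rw [hp, Polynomial.coeff_C_mul, hPq, Polynomial.coeff_map]
    rcases hc0 with h | h <;> rw [h] <;> norm_num
  -- root conversion
  have hconv : ∀ z : ℂ, (P.map (Int.castRingHom ℂ)).IsRoot z ↔ Polynomial.aeval z p = 0 := by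
    intro z
    have hmm : p.map (algebraMap ℚ ℂ) =
        Polynomial.C ((-1 : ℂ) ^ d) * P.map (Int.castRingHom ℂ) := by
      rw [hp, Polynomial.map_mul, Polynomial.map_C, hPq, Polynomial.map_map,
        (RingHom.ext_int _ _ : (algebraMap ℚ ℂ).comp (Int.castRingHom ℚ) = Int.castRingHom ℂ)]
      norm_num
    rw [Polynomial.aeval_def, ← Polynomial.eval_map, hmm]
    simp only [Polynomial.IsRoot, Polynomial.eval_mul, Polynomial.eval_C]
    constructor
    · intro h; rw [h, mul_zero]
    · intro h
      rcases mul_eq_zero.1 h with h' | h'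
      · exfalso
        have : ((-1 : ℂ) ^ d) ≠ 0 := by
          apply pow_ne_zero; norm_num
        exact this h'
      · exact h'
  rcases hkl.lt_or_gt with h | h
  · intro z hz
    exact core p hmonic hpirr hp0 a k l (by omega) h ((hconv _).1 hrk)
      ((hconv _).1 hrl) z ((hconv z).1 hz)
  · intro z hz
    exact core p hmonic hpirr hp0 a l k (by omega) h ((hconv _).1 hrl)
      ((hconv _).1 hrk) z ((hconv z).1 hz)
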